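/- Fix β > 0. For every bounded continuous function f : ℂ → ℂ and every z⁰ ∈ ℂ: (i) the map t ↦ ∫_ℂ P_t(z⁰ − z)·( K̂₁(√(2β)|z|) / z̄ )·f(z) dz is well defined (the integrand is absolutely integrable) and continuous on (0,∞); and (ii) there exists a constant C = C(β) < ∞ such that | ∫_ℂ P_t(z)·( K̂₁(√(2β)|z|) / z̄ )·f(z) dz | ≤ C·(sup_ℂ |f|)·t^{−1/2} for all t > 0. -/

import Mathlib

open MeasureTheory Set

/-- The Macdonald function `K_ν(x) = (x^ν / 2^(ν+1)) ∫₀^∞ e^{-s - x²/(4s)} s^{-ν-1} ds`. -/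
noncomputable def besselK (ν x : ℝ) : ℝ :=
  (x ^ ν / 2 ^ (ν + 1)) *
    ∫ s in Set.Ioi (0 : ℝ), Real.exp (-s - x ^ 2 / (4 * s)) * s ^ (-ν - 1)

/-- `K̂₁(x) = x K₁(x)`. -/
noncomputable def besselKhat1 (x : ℝ) : ℝ := x * besselK 1 x

/-- The two-dimensional heat kernel on `ℂ`: `P_t(z) = (2πt)⁻¹ e^{-|z|²/(2t)}`. -/
noncomputable def heatKernelC (t : ℝ) (z : ℂ) : ℝ :=
  (2 * Real.pi * t)⁻¹ * Real.exp (-‖z‖ ^ 2 / (2 * t))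

/-! ### Auxiliary lemmas -/

lemma exp_neg_le_four_div_sq {u : ℝ} (hu : 0 < u) : Real.exp (-u) ≤ 4 / u ^ 2 := by
  have h2 : u ^ 2 / 4 ≤ Real.exp u := by
    have h1 : u / 2 + 1 ≤ Real.exp (u / 2) := Real.add_one_le_exp _
    have he : Real.exp u = Real.exp (u / 2) * Real.exp (u / 2) := by
      rw [← Real.exp_add]; ring_nf
    nlinarith [Real.exp_pos (u / 2)]
  rw [Real.exp_neg]
  calc (Real.exp u)⁻¹ ≤ (u ^ 2 / 4)⁻¹ := inv_anti₀ (by positivity) h2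
  _ = 4 / u ^ 2 := by rw [inv_div]

lemma besselKhat1_eq (x : ℝ) :
    besselKhat1 x = (x ^ 2 / 4) *
      ∫ s in Set.Ioi (0 : ℝ), Real.exp (-s - x ^ 2 / (4 * s)) * s ^ (-(2:ℝ)) := by
  unfold besselKhat1 besselK
  have h2 : (2:ℝ) ^ ((1:ℝ) + 1) = 4 := by
    rw [show ((1:ℝ) + 1) = ((2:ℕ):ℝ) by norm_num, Real.rpow_natCast]; norm_num
  have h3 : (-(1:ℝ) - 1) = -(2:ℝ) := by norm_num
  rw [Real.rpow_one, h2, h3]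
  ring

lemma g_measurable (x : ℝ) :
    Measurable (fun s : ℝ => Real.exp (-s - x ^ 2 / (4 * s)) * s ^ (-(2:ℝ))) :=
  ((measurable_id.neg.sub (measurable_const.div (measurable_id.const_mul 4))).exp).mul
    (measurable_id.pow measurable_const)

lemma besselKhat1_nonneg {x : ℝ} (hx : 0 ≤ x) : 0 ≤ besselKhat1 x := by
  rw [besselKhat1_eq]
  apply mul_nonneg (by positivity)
  apply setIntegral_nonneg measurableSet_Ioi
  intro s hs
  exact mul_nonneg (Real.exp_pos _).le (Real.rpow_nonneg (le_of_lt hs) _)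

lemma besselKhat1_le_five {x : ℝ} (hx : 0 ≤ x) : besselKhat1 x ≤ 5 := by
  rcases eq_or_lt_of_le hx with h | hxp
  · simp [besselKhat1, ← h]
  set s₀ : ℝ := x ^ 2 / 4 with hs₀def
  have hs₀ : 0 < s₀ := by positivity
  set g : ℝ → ℝ := fun s => Real.exp (-s - x ^ 2 / (4 * s)) * s ^ (-(2:ℝ)) with hgdef
  have hgnn : ∀ s : ℝ, 0 < s → 0 ≤ g s := fun s hs =>
    mul_nonneg (Real.exp_pos _).le (Real.rpow_nonneg hs.le _)
  have hb1 : ∀ s ∈ Ioc (0:ℝ) s₀, g s ≤ 64 / x ^ 4 := by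
    intro s hs
    have hsp : 0 < s := hs.1
    have hrw : s ^ (-(2:ℝ)) = (s ^ 2)⁻¹ := by
      rw [Real.rpow_neg hsp.le, show ((2:ℝ) = ((2:ℕ):ℝ)) by norm_num, Real.rpow_natCast]
    have he : Real.exp (-s - x ^ 2 / (4 * s)) ≤ 4 / (x ^ 2 / (4 * s)) ^ 2 := by
      refine le_trans ?_ (exp_neg_le_four_div_sq (u := x ^ 2 / (4 * s)) (by positivity))
      exact Real.exp_le_exp.2 (by nlinarith)
    calc g s ≤ (4 / (x ^ 2 / (4 * s)) ^ 2) * (s ^ 2)⁻¹ := by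
          rw [hgdef]; simp only [hrw]
          exact mul_le_mul_of_nonneg_right he (by positivity)
      _ = 64 / x ^ 4 := by field_simp; ring
  have hb2 : ∀ s ∈ Ioi s₀, g s ≤ s ^ (-(2:ℝ)) := by
    intro s hs
    have hsp : 0 < s := hs₀.trans hs
    have he : Real.exp (-s - x ^ 2 / (4 * s)) ≤ 1 := by
      rw [show (1:ℝ) = Real.exp 0 by rw [Real.exp_zero]]
      apply Real.exp_le_exp.2
      have : 0 < x ^ 2 / (4 * s) := by positivity
      linarith
    calc g s ≤ 1 * s ^ (-(2:ℝ)) :=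
          mul_le_mul_of_nonneg_right he (Real.rpow_nonneg hsp.le _)
      _ = s ^ (-(2:ℝ)) := one_mul _
  have hc1 : IntegrableOn (fun _ : ℝ => (64:ℝ) / x ^ 4) (Ioc 0 s₀) := by
    refine integrableOn_const ?_
    exact measure_Ioc_lt_top.ne
  have h1 : IntegrableOn g (Ioc 0 s₀) := by
    refine Integrable.mono' hc1 ((g_measurable x).aestronglyMeasurable) ?_
    filter_upwards [ae_restrict_mem measurableSet_Ioc] with s hs
    rw [Real.norm_eq_abs, abs_of_nonneg (hgnn s hs.1)]
    exact hb1 s hs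
  have hc2 : IntegrableOn (fun s : ℝ => s ^ (-(2:ℝ))) (Ioi s₀) :=
    integrableOn_Ioi_rpow_of_lt (by norm_num) hs₀
  have h2 : IntegrableOn g (Ioi s₀) := by
    refine Integrable.mono' hc2 ((g_measurable x).aestronglyMeasurable) ?_
    filter_upwards [ae_restrict_mem measurableSet_Ioi] with s hs
    rw [Real.norm_eq_abs, abs_of_nonneg (hgnn s (hs₀.trans hs))]
    exact hb2 s hs
  have hsplit : ∫ s in Ioi (0:ℝ), g s = (∫ s in Ioc 0 s₀, g s) + ∫ s in Ioi s₀, g s := by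
    rw [← setIntegral_union (Ioc_disjoint_Ioi le_rfl) measurableSet_Ioi h1 h2,
      Ioc_union_Ioi_eq_Ioi hs₀.le]
  have est1 : ∫ s in Ioc (0:ℝ) s₀, g s ≤ 16 / x ^ 2 := by
    calc ∫ s in Ioc (0:ℝ) s₀, g s ≤ ∫ _ in Ioc (0:ℝ) s₀, (64:ℝ) / x ^ 4 :=
        setIntegral_mono_on h1 hc1 measurableSet_Ioc hb1
      _ = (volume (Ioc (0:ℝ) s₀)).toReal • ((64:ℝ) / x ^ 4) := setIntegral_const _
      _ = s₀ * (64 / x ^ 4) := by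
          rw [Real.volume_Ioc, ENNReal.toReal_ofReal (by linarith), smul_eq_mul, sub_zero]
      _ = 16 / x ^ 2 := by rw [hs₀def]; field_simp; ring
  have est2 : ∫ s in Ioi s₀, g s ≤ 4 / x ^ 2 := by
    calc ∫ s in Ioi s₀, g s ≤ ∫ s in Ioi s₀, s ^ (-(2:ℝ)) :=
        setIntegral_mono_on h2 hc2 measurableSet_Ioi hb2
      _ = -s₀ ^ ((-(2:ℝ)) + 1) / ((-(2:ℝ)) + 1) := integral_Ioi_rpow_of_lt (by norm_num) hs₀
      _ = s₀⁻¹ := by norm_num [Real.rpow_neg_one]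
      _ = 4 / x ^ 2 := by rw [hs₀def]; field_simp
  have hI : ∫ s in Ioi (0:ℝ), g s ≤ 20 / x ^ 2 := by
    have h20 : (16:ℝ) / x ^ 2 + 4 / x ^ 2 = 20 / x ^ 2 := by ring
    rw [hsplit]; linarith
  rw [besselKhat1_eq]
  calc (x ^ 2 / 4) * ∫ s in Ioi (0:ℝ), Real.exp (-s - x ^ 2 / (4 * s)) * s ^ (-(2:ℝ))
      ≤ (x ^ 2 / 4) * (20 / x ^ 2) := mul_le_mul_of_nonneg_left hI (by positivity)
    _ = 5 := by field_simp; ring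

lemma besselKhat1_measurable : Measurable besselKhat1 := by
  unfold besselKhat1 besselK
  apply measurable_id.mul
  apply Measurable.mul
  · exact (measurable_id.pow measurable_const).div_const _
  · have hsm : StronglyMeasurable
        (fun p : ℝ × ℝ => Real.exp (-p.2 - p.1 ^ 2 / (4 * p.2)) * p.2 ^ (-(1:ℝ) - 1)) := by
      apply Measurable.stronglyMeasurable
      exact ((measurable_snd.neg.sub
        ((measurable_fst.pow measurable_const).div (measurable_snd.const_mul 4))).exp).mul
        (measurable_snd.pow measurable_const)
    exact (hsm.integral_prod_right' (ν := volume.restrict (Set.Ioi (0:ℝ)))).measurable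

lemma integrable_abs_rpow_mul_exp {b : ℝ} (hb : 0 < b) :
    Integrable fun x : ℝ => |x| ^ (-(1:ℝ)/2) * Real.exp (-b * x ^ 2) := by
  have base : IntegrableOn (fun x : ℝ => |x| ^ (-(1:ℝ)/2) * Real.exp (-b * x ^ 2)) (Ioi 0) := by
    refine (integrableOn_rpow_mul_exp_neg_mul_sq hb (s := -(1:ℝ)/2) (by norm_num)).congr_fun
      (fun x hx => ?_) measurableSet_Ioi
    rw [abs_of_pos hx]
  rw [← integrableOn_univ, ← Iic_union_Ioi (a := (0:ℝ)), integrableOn_union]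
  refine ⟨?_, base⟩
  rw [← (Measure.measurePreserving_neg (volume : Measure ℝ)).integrableOn_comp_preimage
      (Homeomorph.neg ℝ).measurableEmbedding]
  simp only [Function.comp_def, abs_neg, neg_sq, neg_preimage, neg_Iic, neg_zero]
  rw [integrableOn_Ici_iff_integrableOn_Ioi]
  exact base

lemma re_ne_zero_ae : ∀ᵐ z : ℂ, z.re ≠ 0 ∧ z.im ≠ 0 := by
  have h0 : volume ({z : ℂ | z.re = 0}) = 0 := by
    have hset : {z : ℂ | z.re = 0}
        = Complex.measurableEquivRealProd ⁻¹' (({0} : Set ℝ) ×ˢ (univ : Set ℝ)) := by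
      ext z; simp [Complex.measurableEquivRealProd_apply, eq_comm]
    rw [hset, Complex.volume_preserving_equiv_real_prod.measure_preimage
      (((measurableSet_singleton (0:ℝ)).prod MeasurableSet.univ).nullMeasurableSet)]
    rw [Measure.volume_eq_prod, Measure.prod_prod]
    simp
  have h1 : volume ({z : ℂ | z.im = 0}) = 0 := by
    have hset : {z : ℂ | z.im = 0}
        = Complex.measurableEquivRealProd ⁻¹' ((univ : Set ℝ) ×ˢ ({0} : Set ℝ)) := by
      ext z; simp [Complex.measurableEquivRealProd_apply, eq_comm]
    rw [hset, Complex.volume_preserving_equiv_real_prod.measure_preimage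
      ((MeasurableSet.univ.prod (measurableSet_singleton (0:ℝ))).nullMeasurableSet)]
    rw [Measure.volume_eq_prod, Measure.prod_prod]
    simp
  have a0 : ∀ᵐ z : ℂ, z.re ≠ 0 := by
    rw [ae_iff]; simpa using h0
  have a1 : ∀ᵐ z : ℂ, z.im ≠ 0 := by
    rw [ae_iff]; simpa using h1
  exact a0.and a1

lemma integrable_gauss_inv_norm {b : ℝ} (hb : 0 < b) :
    Integrable fun z : ℂ => Real.exp (-b * ‖z‖ ^ 2) * ‖z‖⁻¹ := by
  have hF := integrable_abs_rpow_mul_exp hb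
  have hD : Integrable (fun z : ℂ => (|z.re| ^ (-(1:ℝ)/2) * Real.exp (-b * z.re ^ 2)) *
      (|z.im| ^ (-(1:ℝ)/2) * Real.exp (-b * z.im ^ 2))) := by
    have h2 : Integrable (fun p : ℝ × ℝ => (|p.1| ^ (-(1:ℝ)/2) * Real.exp (-b * p.1 ^ 2)) *
        (|p.2| ^ (-(1:ℝ)/2) * Real.exp (-b * p.2 ^ 2))) := by
      rw [Measure.volume_eq_prod]
      exact hF.mul_prod hF
    exact (Complex.volume_preserving_equiv_real_prod.integrable_comp_emb
      Complex.measurableEquivRealProd.measurableEmbedding).2 h2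
  have hmeas : AEStronglyMeasurable (fun z : ℂ => Real.exp (-b * ‖z‖ ^ 2) * ‖z‖⁻¹) volume := by
    apply Measurable.aestronglyMeasurable
    exact ((measurable_norm.pow measurable_const).const_mul (-b)).exp.mul measurable_norm.inv
  refine hD.mono' hmeas ?_
  filter_upwards [re_ne_zero_ae] with z hz
  obtain ⟨hre, him⟩ := hz
  have ha : 0 < |z.re| := abs_pos.2 hre
  have hc : 0 < |z.im| := abs_pos.2 him
  have hnormsq : ‖z‖ ^ 2 = z.re ^ 2 + z.im ^ 2 := by
    rw [Complex.sq_norm, Complex.normSq_apply]; ring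
  have hz2 : Real.sqrt (|z.re| * |z.im|) ≤ ‖z‖ := by
    rw [Complex.norm_def, Complex.normSq_apply]
    apply Real.sqrt_le_sqrt
    nlinarith [abs_mul_abs_self z.re, abs_mul_abs_self z.im, sq_nonneg (|z.re| - |z.im|)]
  have hsqpos : 0 < Real.sqrt (|z.re| * |z.im|) := Real.sqrt_pos.2 (mul_pos ha hc)
  have hinv : ‖z‖⁻¹ ≤ |z.re| ^ (-(1:ℝ)/2) * |z.im| ^ (-(1:ℝ)/2) := by
    have h1 : ‖z‖⁻¹ ≤ (Real.sqrt (|z.re| * |z.im|))⁻¹ := inv_anti₀ hsqpos hz2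
    have h2 : (Real.sqrt (|z.re| * |z.im|))⁻¹ = |z.re| ^ (-(1:ℝ)/2) * |z.im| ^ (-(1:ℝ)/2) := by
      rw [show (-(1:ℝ)/2) = -(1/2 : ℝ) by norm_num, Real.rpow_neg ha.le, Real.rpow_neg hc.le,
        ← mul_inv, ← Real.mul_rpow ha.le hc.le, Real.sqrt_eq_rpow]
    rw [← h2]; exact h1
  have hexp : Real.exp (-b * ‖z‖ ^ 2) = Real.exp (-b * z.re ^ 2) * Real.exp (-b * z.im ^ 2) := by
    rw [← Real.exp_add, hnormsq]; ring_nf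
  rw [Real.norm_eq_abs, abs_of_nonneg (by positivity)]
  calc Real.exp (-b * ‖z‖ ^ 2) * ‖z‖⁻¹
      ≤ Real.exp (-b * ‖z‖ ^ 2) * (|z.re| ^ (-(1:ℝ)/2) * |z.im| ^ (-(1:ℝ)/2)) :=
        mul_le_mul_of_nonneg_left hinv (Real.exp_pos _).le
    _ = (|z.re| ^ (-(1:ℝ)/2) * Real.exp (-b * z.re ^ 2)) *
        (|z.im| ^ (-(1:ℝ)/2) * Real.exp (-b * z.im ^ 2)) := by rw [hexp]; ring

lemma heatKernelC_nonneg {t : ℝ} (ht : 0 < t) (z : ℂ) : 0 ≤ heatKernelC t z := by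
  unfold heatKernelC; positivity

lemma integrand_aesm (c : ℝ) {f : ℂ → ℂ} (hf : Continuous f) (t : ℝ) (z₀ : ℂ) :
    AEStronglyMeasurable (fun z : ℂ =>
      (heatKernelC t (z₀ - z) : ℂ) *
        ((besselKhat1 (c * ‖z‖) : ℂ) / (starRingEnd ℂ) z) * f z) volume := by
  apply Measurable.aestronglyMeasurable
  have h1 : Continuous fun z : ℂ => heatKernelC t (z₀ - z) := by
    unfold heatKernelC; fun_prop
  refine Measurable.mul (Measurable.mul ?_ ?_) hf.measurable
  · exact Complex.measurable_ofReal.comp h1.measurable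
  · apply Measurable.div
    · exact Complex.measurable_ofReal.comp
        (besselKhat1_measurable.comp (measurable_norm.const_mul c))
    · exact Complex.continuous_conj.measurable

lemma norm_integrand_le {c M : ℝ} (hc : 0 ≤ c) {f : ℂ → ℂ} (hM : ∀ z, ‖f z‖ ≤ M)
    {t : ℝ} (ht : 0 < t) (w z : ℂ) :
    ‖(heatKernelC t w : ℂ) * ((besselKhat1 (c * ‖z‖) : ℂ) / (starRingEnd ℂ) z) * f z‖
      ≤ heatKernelC t w * (5 * ‖z‖⁻¹) * M := by
  have hM0 : 0 ≤ M := (norm_nonneg _).trans (hM 0)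
  have hcz : 0 ≤ c * ‖z‖ := mul_nonneg hc (norm_nonneg _)
  rw [norm_mul, norm_mul, norm_div, Complex.norm_real, Complex.norm_real,
    RCLike.norm_conj, Real.norm_eq_abs, Real.norm_eq_abs,
    abs_of_nonneg (heatKernelC_nonneg ht w), abs_of_nonneg (besselKhat1_nonneg hcz)]
  have h2 : besselKhat1 (c * ‖z‖) / ‖z‖ ≤ 5 * ‖z‖⁻¹ := by
    rw [div_eq_mul_inv]
    exact mul_le_mul_of_nonneg_right (besselKhat1_le_five hcz) (inv_nonneg.2 (norm_nonneg _))
  have hnn := heatKernelC_nonneg ht w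
  refine mul_le_mul (mul_le_mul le_rfl h2
      (div_nonneg (besselKhat1_nonneg hcz) (norm_nonneg _)) hnn)
    (hM z) (norm_nonneg _) ?_
  exact mul_nonneg hnn (by positivity)

lemma heatKernelC_le {τ t T : ℝ} (hτ : 0 < τ) (h1 : τ ≤ t) (h2 : t ≤ T) (z₀ z : ℂ) :
    heatKernelC t (z₀ - z)
      ≤ (2 * Real.pi * τ)⁻¹ *
        (Real.exp (‖z₀‖ ^ 2 / (2 * T)) * Real.exp (-(4 * T)⁻¹ * ‖z‖ ^ 2)) := by
  have ht : 0 < t := hτ.trans_le h1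
  have hT : 0 < T := ht.trans_le h2
  have hkey : ‖z‖ ^ 2 / 2 - ‖z₀‖ ^ 2 ≤ ‖z₀ - z‖ ^ 2 := by
    have h := norm_sub_le z₀ (z₀ - z)
    rw [sub_sub_cancel] at h
    nlinarith [norm_nonneg (z₀ - z), norm_nonneg z₀, norm_nonneg z,
      sq_nonneg (‖z₀‖ - ‖z₀ - z‖), mul_self_le_mul_self (norm_nonneg z) h]
  have harg : -‖z₀ - z‖ ^ 2 / (2 * t) ≤ ‖z₀‖ ^ 2 / (2 * T) + -(4 * T)⁻¹ * ‖z‖ ^ 2 := by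
    have l1 : -‖z₀ - z‖ ^ 2 / (2 * t) ≤ -‖z₀ - z‖ ^ 2 / (2 * T) := by
      rw [div_le_div_iff₀ (by positivity) (by positivity)]
      nlinarith [sq_nonneg ‖z₀ - z‖]
    have l2 : -‖z₀ - z‖ ^ 2 / (2 * T) ≤ ‖z₀‖ ^ 2 / (2 * T) + -(4 * T)⁻¹ * ‖z‖ ^ 2 := by
      have heq : ‖z₀‖ ^ 2 / (2 * T) + -(4 * T)⁻¹ * ‖z‖ ^ 2
          = (‖z₀‖ ^ 2 - ‖z‖ ^ 2 / 2) / (2 * T) := by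
        field_simp; ring
      rw [heq, div_le_div_iff₀ (by positivity) (by positivity)]
      nlinarith [hkey]
    linarith
  unfold heatKernelC
  have e1 : (2 * Real.pi * t)⁻¹ ≤ (2 * Real.pi * τ)⁻¹ := by
    apply inv_anti₀ (by positivity)
    nlinarith [Real.pi_pos]
  have e2 : Real.exp (-‖z₀ - z‖ ^ 2 / (2 * t))
      ≤ Real.exp (‖z₀‖ ^ 2 / (2 * T)) * Real.exp (-(4 * T)⁻¹ * ‖z‖ ^ 2) := by
    rw [← Real.exp_add]; exact Real.exp_le_exp.2 harg
  exact mul_le_mul e1 e2 (Real.exp_pos _).le (by positivity)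

set_option maxHeartbeats 1000000 in
lemma stmt18_part3 {c M : ℝ} (hc : 0 ≤ c) {f : ℂ → ℂ} (hM : ∀ z, ‖f z‖ ≤ M)
    (hGint : ∀ t : ℝ, 0 < t → Integrable (fun z : ℂ =>
      (heatKernelC t z : ℂ) * ((besselKhat1 (c * ‖z‖) : ℂ) / (starRingEnd ℂ) z) * f z))
    {t : ℝ} (ht : 0 < t) :
    ‖∫ z : ℂ, (heatKernelC t z : ℂ) *
        ((besselKhat1 (c * ‖z‖) : ℂ) / (starRingEnd ℂ) z) * f z‖
      ≤ 10 * (volume (Metric.ball (0:ℂ) 1)).toReal * Real.sqrt (2 * Real.pi)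
          / (2 * Real.pi) * M * t ^ (-(1:ℝ) / 2) := by
  have hM0 : 0 ≤ M := (norm_nonneg _).trans (hM 0)
  have hκ : 0 ≤ (volume (Metric.ball (0:ℂ) 1)).toReal := ENNReal.toReal_nonneg
  have hψint : Integrable (fun z : ℂ =>
      (2 * Real.pi * t)⁻¹ * Real.exp (-‖z‖ ^ 2 / (2 * t)) * (5 * ‖z‖⁻¹) * M) := by
    refine ((integrable_gauss_inv_norm (b := (2*t)⁻¹) (by positivity)).const_mul
      ((2 * Real.pi * t)⁻¹ * 5 * M)).congr (Filter.Eventually.of_forall fun z => ?_)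
    have harg : -(2*t)⁻¹ * ‖z‖ ^ 2 = -‖z‖ ^ 2 / (2 * t) := by field_simp
    simp only [harg]
    ring
  have hptw : ∀ z : ℂ,
      ‖(heatKernelC t z : ℂ) * ((besselKhat1 (c * ‖z‖) : ℂ) / (starRingEnd ℂ) z) * f z‖
        ≤ (2 * Real.pi * t)⁻¹ * Real.exp (-‖z‖ ^ 2 / (2 * t)) * (5 * ‖z‖⁻¹) * M := by
    intro z
    refine (norm_integrand_le hc hM ht z z).trans (le_of_eq ?_)
    unfold heatKernelC
    ring
  have step1 : ‖∫ z : ℂ, (heatKernelC t z : ℂ) *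
        ((besselKhat1 (c * ‖z‖) : ℂ) / (starRingEnd ℂ) z) * f z‖
      ≤ ∫ z : ℂ, (2 * Real.pi * t)⁻¹ * Real.exp (-‖z‖ ^ 2 / (2 * t)) * (5 * ‖z‖⁻¹) * M := by
    refine (norm_integral_le_integral_norm _).trans ?_
    exact integral_mono (hGint t ht).norm hψint hptw
  have hradial : ∫ z : ℂ, (2 * Real.pi * t)⁻¹ * Real.exp (-‖z‖ ^ 2 / (2 * t)) * (5 * ‖z‖⁻¹) * M
      = (2:ℕ) • (volume (Metric.ball (0:ℂ) 1)).toReal •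
          ∫ y in Ioi (0:ℝ), y ^ (2 - 1) •
            ((2 * Real.pi * t)⁻¹ * Real.exp (-y ^ 2 / (2 * t)) * (5 * y⁻¹) * M) := by
    rw [integral_fun_norm_addHaar (volume : Measure ℂ)
      (fun r : ℝ => (2 * Real.pi * t)⁻¹ * Real.exp (-r ^ 2 / (2 * t)) * (5 * r⁻¹) * M),
      Complex.finrank_real_complex]
    rfl
  have hradial2 : ∫ y in Ioi (0:ℝ), y ^ (2 - 1) •
        ((2 * Real.pi * t)⁻¹ * Real.exp (-y ^ 2 / (2 * t)) * (5 * y⁻¹) * M)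
      = ((2 * Real.pi * t)⁻¹ * (5 * M)) * ∫ y in Ioi (0:ℝ), Real.exp (-y ^ 2 / (2 * t)) := by
    rw [← integral_const_mul]
    refine setIntegral_congr_fun measurableSet_Ioi fun y hy => ?_
    have hy0 : (0:ℝ) < y := hy
    simp only [pow_one, smul_eq_mul]
    field_simp
    ring
  have hJnn : 0 ≤ ∫ y in Ioi (0:ℝ), Real.exp (-y ^ 2 / (2 * t)) :=
    setIntegral_nonneg measurableSet_Ioi fun y _ => (Real.exp_pos _).le
  have harg2 : ∀ y : ℝ, -(2*t)⁻¹ * y ^ 2 = -y ^ 2 / (2 * t) := fun y => by field_simp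
  have hJ : ∫ y in Ioi (0:ℝ), Real.exp (-y ^ 2 / (2 * t)) ≤ Real.sqrt (2 * Real.pi * t) := by
    have hig : Integrable (fun y : ℝ => Real.exp (-y ^ 2 / (2 * t))) := by
      refine (integrable_exp_neg_mul_sq (b := (2*t)⁻¹)  (by positivity)).congr
        (Filter.Eventually.of_forall fun y => ?_)
      simp only [harg2]
    have h1 : ∫ y in Ioi (0:ℝ), Real.exp (-y ^ 2 / (2 * t))
        ≤ ∫ y : ℝ, Real.exp (-y ^ 2 / (2 * t)) := by
      apply setIntegral_le_integral hig
      exact Filter.Eventually.of_forall fun y => (Real.exp_pos _).le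
    have h2 : ∫ y : ℝ, Real.exp (-y ^ 2 / (2 * t)) = Real.sqrt (Real.pi / (2*t)⁻¹) := by
      rw [← integral_gaussian ((2*t)⁻¹)]
      exact integral_congr_ae (Filter.Eventually.of_forall fun y => by simp only [harg2])
    have h3 : Real.sqrt (Real.pi / (2*t)⁻¹) = Real.sqrt (2 * Real.pi * t) := by
      rw [show Real.pi / (2*t)⁻¹ = 2 * Real.pi * t by field_simp]
    rw [h2, h3] at h1; exact h1
  have hfinal : (2:ℕ) • (volume (Metric.ball (0:ℂ) 1)).toReal •
        (((2 * Real.pi * t)⁻¹ * (5 * M)) * ∫ y in Ioi (0:ℝ), Real.exp (-y ^ 2 / (2 * t)))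
      ≤ 10 * (volume (Metric.ball (0:ℂ) 1)).toReal * Real.sqrt (2 * Real.pi)
          / (2 * Real.pi) * M * t ^ (-(1:ℝ) / 2) := by
    have hs : Real.sqrt (2 * Real.pi * t) = Real.sqrt (2 * Real.pi) * Real.sqrt t :=
      Real.sqrt_mul (by positivity) t
    have hrt : t ^ (-(1:ℝ) / 2) = (Real.sqrt t)⁻¹ := by
      rw [show (-(1:ℝ)/2) = -(1/2 : ℝ) by norm_num, Real.rpow_neg ht.le, Real.sqrt_eq_rpow]
    have hsqt : Real.sqrt t * Real.sqrt t = t := Real.mul_self_sqrt ht.le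
    have hsqtpos : 0 < Real.sqrt t := Real.sqrt_pos.2 ht
    rw [nsmul_eq_mul, smul_eq_mul, hrt]
    calc ((2:ℕ):ℝ) * ((volume (Metric.ball (0:ℂ) 1)).toReal * (((2 * Real.pi * t)⁻¹ * (5 * M)) *
          ∫ y in Ioi (0:ℝ), Real.exp (-y ^ 2 / (2 * t))))
        ≤ ((2:ℕ):ℝ) * ((volume (Metric.ball (0:ℂ) 1)).toReal *
            (((2 * Real.pi * t)⁻¹ * (5 * M)) * Real.sqrt (2 * Real.pi * t))) := by
          have hx : (0:ℝ) ≤ (2 * Real.pi * t)⁻¹ * (5 * M) := by positivity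
          gcongr
      _ = 10 * (volume (Metric.ball (0:ℂ) 1)).toReal * Real.sqrt (2 * Real.pi)
            / (2 * Real.pi) * M * (Real.sqrt t)⁻¹ := by
          rw [hs, show (((2:ℕ)):ℝ) = (2:ℝ) by norm_num]
          field_simp
          linear_combination (10 * M) * hsqt
  calc ‖∫ z : ℂ, (heatKernelC t z : ℂ) *
        ((besselKhat1 (c * ‖z‖) : ℂ) / (starRingEnd ℂ) z) * f z‖
      ≤ ∫ z : ℂ, (2 * Real.pi * t)⁻¹ * Real.exp (-‖z‖ ^ 2 / (2 * t)) * (5 * ‖z‖⁻¹) * M := step1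
    _ = (2:ℕ) • (volume (Metric.ball (0:ℂ) 1)).toReal •
          (((2 * Real.pi * t)⁻¹ * (5 * M)) * ∫ y in Ioi (0:ℝ), Real.exp (-y ^ 2 / (2 * t))) := by
        rw [hradial, hradial2]
    _ ≤ _ := hfinal

set_option maxHeartbeats 1000000 in
/-- For a bounded continuous `f : ℂ → ℂ` and `z⁰ ∈ ℂ`:
(i) `z ↦ P_t(z⁰ - z) (K̂₁(√(2β)|z|)/z̄) f(z)` is integrable for every `t > 0`, and
`t ↦ ∫ P_t(z⁰ - z) (K̂₁(√(2β)|z|)/z̄) f(z) dz` is continuous on `(0,∞)`;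
(ii) there is `C = C(β)` with `|∫ P_t(z)(K̂₁(√(2β)|z|)/z̄) f(z) dz| ≤ C (sup|f|) t^{-1/2}`
for all `t > 0`. -/
theorem stmt18 (β : ℝ) (hβ : 0 < β) :
    ∃ C : ℝ, ∀ (f : ℂ → ℂ), Continuous f → ∀ M : ℝ, (∀ z, ‖f z‖ ≤ M) →
      (∀ z₀ : ℂ, ∀ t : ℝ, 0 < t →
        Integrable (fun z : ℂ =>
          (heatKernelC t (z₀ - z) : ℂ) *
            ((besselKhat1 (Real.sqrt (2 * β) * ‖z‖) : ℂ) / (starRingEnd ℂ) z) * f z)) ∧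
      (∀ z₀ : ℂ, ContinuousOn
        (fun t : ℝ =>
          ∫ z : ℂ,
            (heatKernelC t (z₀ - z) : ℂ) *
              ((besselKhat1 (Real.sqrt (2 * β) * ‖z‖) : ℂ) / (starRingEnd ℂ) z) * f z)
        (Set.Ioi 0)) ∧
      (∀ t : ℝ, 0 < t →
        ‖∫ z : ℂ,
            (heatKernelC t z : ℂ) *
              ((besselKhat1 (Real.sqrt (2 * β) * ‖z‖) : ℂ) / (starRingEnd ℂ) z) * f z‖
          ≤ C * M * t ^ (-(1 : ℝ) / 2)) := by
  have hc : 0 ≤ Real.sqrt (2 * β) := Real.sqrt_nonneg _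
  refine ⟨10 * (volume (Metric.ball (0:ℂ) 1)).toReal * Real.sqrt (2 * Real.pi)
      / (2 * Real.pi), ?_⟩
  intro f hf M hM
  have hM0 : 0 ≤ M := (norm_nonneg _).trans (hM 0)
  have hdom : ∀ (τ T : ℝ), 0 < τ → ∀ z₀ : ℂ, ∀ t : ℝ, τ ≤ t → t ≤ T → ∀ z : ℂ,
      ‖(heatKernelC t (z₀ - z) : ℂ) *
          ((besselKhat1 (Real.sqrt (2 * β) * ‖z‖) : ℂ) / (starRingEnd ℂ) z) * f z‖
      ≤ ((2 * Real.pi * τ)⁻¹ * Real.exp (‖z₀‖ ^ 2 / (2 * T)) * (5 * M)) *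
          (Real.exp (-(4 * T)⁻¹ * ‖z‖ ^ 2) * ‖z‖⁻¹) := by
    intro τ T hτ z₀ t h1 h2 z
    have ht : 0 < t := hτ.trans_le h1
    calc ‖(heatKernelC t (z₀ - z) : ℂ) *
          ((besselKhat1 (Real.sqrt (2 * β) * ‖z‖) : ℂ) / (starRingEnd ℂ) z) * f z‖
        ≤ heatKernelC t (z₀ - z) * (5 * ‖z‖⁻¹) * M := norm_integrand_le hc hM ht _ z
      _ ≤ ((2 * Real.pi * τ)⁻¹ *
            (Real.exp (‖z₀‖ ^ 2 / (2 * T)) * Real.exp (-(4 * T)⁻¹ * ‖z‖ ^ 2))) *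
            (5 * ‖z‖⁻¹) * M := by
          refine mul_le_mul_of_nonneg_right (mul_le_mul_of_nonneg_right
            (heatKernelC_le hτ h1 h2 z₀ z) (by positivity)) hM0
      _ = ((2 * Real.pi * τ)⁻¹ * Real.exp (‖z₀‖ ^ 2 / (2 * T)) * (5 * M)) *
            (Real.exp (-(4 * T)⁻¹ * ‖z‖ ^ 2) * ‖z‖⁻¹) := by ring
  have hbint : ∀ (τ T : ℝ), 0 < τ → 0 < T → ∀ z₀ : ℂ,
      Integrable (fun z : ℂ =>
        ((2 * Real.pi * τ)⁻¹ * Real.exp (‖z₀‖ ^ 2 / (2 * T)) * (5 * M)) *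
          (Real.exp (-(4 * T)⁻¹ * ‖z‖ ^ 2) * ‖z‖⁻¹)) := by
    intro τ T hτ hT z₀
    exact (integrable_gauss_inv_norm (b := (4 * T)⁻¹) (by positivity)).const_mul _
  have hint : ∀ z₀ : ℂ, ∀ t : ℝ, 0 < t →
      Integrable (fun z : ℂ =>
        (heatKernelC t (z₀ - z) : ℂ) *
          ((besselKhat1 (Real.sqrt (2 * β) * ‖z‖) : ℂ) / (starRingEnd ℂ) z) * f z) := by
    intro z₀ t ht
    exact ((hbint t t ht ht z₀).mono' (integrand_aesm _ hf t z₀)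
      (Filter.Eventually.of_forall (hdom t t ht z₀ t le_rfl le_rfl)))
  refine ⟨hint, ?_, ?_⟩
  · intro z₀
    intro t₀ ht₀
    have ht₀' : (0:ℝ) < t₀ := ht₀
    apply ContinuousAt.continuousWithinAt
    apply MeasureTheory.continuousAt_of_dominated
      (bound := fun z : ℂ => ((2 * Real.pi * (t₀/2))⁻¹ *
          Real.exp (‖z₀‖ ^ 2 / (2 * (2*t₀))) * (5 * M)) *
          (Real.exp (-(4 * (2*t₀))⁻¹ * ‖z‖ ^ 2) * ‖z‖⁻¹))
    · exact Filter.Eventually.of_forall fun t => integrand_aesm _ hf t z₀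
    · have hmem : Ioo (t₀/2) (2*t₀) ∈ nhds t₀ := Ioo_mem_nhds (by linarith) (by linarith)
      filter_upwards [hmem] with t htm
      exact Filter.Eventually.of_forall
        (hdom (t₀/2) (2*t₀) (by linarith) z₀ t htm.1.le htm.2.le)
    · exact hbint (t₀/2) (2*t₀) (by linarith) (by linarith) z₀
    · refine Filter.Eventually.of_forall fun z => ?_
      have h1 : ContinuousAt (fun t : ℝ => heatKernelC t (z₀ - z)) t₀ := by
        unfold heatKernelC
        have hne : (2 * Real.pi * t₀) ≠ 0 := by positivity
        have hne2 : (2 * t₀) ≠ 0 := by positivity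
        exact (((continuous_const.mul continuous_id).continuousAt).inv₀ hne).mul
          ((Real.continuous_exp.continuousAt).comp
            (ContinuousAt.div continuousAt_const
              ((continuous_const.mul continuous_id).continuousAt) hne2))
      exact ((Complex.continuous_ofReal.continuousAt.comp h1).mul continuousAt_const).mul
        continuousAt_const
  · intro t ht
    have hGint : ∀ s : ℝ, 0 < s → Integrable (fun z : ℂ =>
        (heatKernelC s z : ℂ) *
          ((besselKhat1 (Real.sqrt (2 * β) * ‖z‖) : ℂ) / (starRingEnd ℂ) z) * f z) := by
      intro s hs
      refine (hint 0 s hs).congr (Filter.Eventually.of_forall fun z => ?_)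
      simp [heatKernelC, zero_sub, norm_neg]
    exact stmt18_part3 hc hM hGint ht
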